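/- Let E be a real inner product space, let K_1 ⊇ K_2 ⊇ ⋯ ⊇ K_m be nested nonempty convex subsets of E, and let p ∈ K_m (so p lies in every K_τ). Let y_0 ∈ E, and for τ = 1, …, m let y_τ ∈ K_τ be a nearest point of K_τ to y_{τ−1}, i.e. ‖y_{τ−1} − y_τ‖ ≤ ‖y_{τ−1} − z‖ for all z ∈ K_τ. Then ‖y_τ − p‖ ≤ ‖y_0 − p‖ for every τ = 0, …, m. Consequently, if ‖y_0 − p‖ ≤ δ then every iterate satisfies ‖y_τ − y_0‖ ≤ 2δ. -/

import Mathlib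

lemma frugal_contract {E : Type*} [NormedAddCommGroup E] [InnerProductSpace ℝ E]
    {S : Set E} (hS : Convex ℝ S) {u v q : E} (hv : v ∈ S) (hq : q ∈ S)
    (hmin : ∀ z ∈ S, ‖u - v‖ ≤ ‖u - z‖) : ‖v - q‖ ≤ ‖u - q‖ := by
  have hne : Nonempty S := ⟨⟨v, hv⟩⟩
  have heq : ‖u - v‖ = ⨅ w : S, ‖u - w‖ := by
    refine le_antisymm (le_ciInf fun w => hmin w w.2) (ciInf_le (f := fun w : S => ‖u - w‖) ⟨0, ?_⟩ ⟨v, hv⟩)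
    rintro x ⟨w, rfl⟩; exact norm_nonneg _
  have hvi : inner ℝ (u - v) (q - v) ≤ (0 : ℝ) :=
    ((norm_eq_iInf_iff_real_inner_le_zero hS hv).mp heq) q hq
  have hexp : ‖u - q‖ ^ 2 = ‖u - v‖ ^ 2 + 2 * inner ℝ (u - v) (v - q) + ‖v - q‖ ^ 2 := by
    have := @norm_add_sq_real E _ _ (u - v) (v - q)
    simpa [sub_add_sub_cancel] using this
  have hneg : (inner ℝ (u - v) (v - q) : ℝ) = - inner ℝ (u - v) (q - v) := by
    rw [← inner_neg_right, neg_sub]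
  nlinarith [norm_nonneg (u - v), norm_nonneg (v - q), norm_nonneg (u - q)]

theorem frugal_phase_confinement
    {E : Type*} [NormedAddCommGroup E] [InnerProductSpace ℝ E]
    (m : ℕ) (hm : 1 ≤ m) (K : ℕ → Set E)
    (hconv : ∀ τ ∈ Finset.Icc 1 m, Convex ℝ (K τ))
    (hnest : ∀ τ, 1 ≤ τ → τ < m → K (τ + 1) ⊆ K τ)
    (p : E) (hp : p ∈ K m)
    (y : ℕ → E)
    (hy : ∀ τ ∈ Finset.Icc 1 m, y τ ∈ K τ ∧
      ∀ z ∈ K τ, ‖y (τ - 1) - y τ‖ ≤ ‖y (τ - 1) - z‖)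
    (δ : ℝ) :
    (∀ τ ≤ m, ‖y τ - p‖ ≤ ‖y 0 - p‖) ∧
    (‖y 0 - p‖ ≤ δ → ∀ τ ≤ m, ‖y τ - y 0‖ ≤ 2 * δ) := by
  have hpK : ∀ d τ, τ + d = m → 1 ≤ τ → p ∈ K τ := by
    intro d
    induction d with
    | zero =>
      intro τ h _
      have hτm : τ = m := by omega
      rwa [hτm]
    | succ d ih => intro τ h h1; exact hnest τ h1 (by omega) (ih (τ + 1) (by omega) (by omega))
  have key : ∀ τ ≤ m, ‖y τ - p‖ ≤ ‖y 0 - p‖ := by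
    intro τ
    induction τ with
    | zero => intro _; exact le_refl _
    | succ τ ih =>
      intro h
      have h1 : τ + 1 ∈ Finset.Icc 1 m := by
        simp only [Finset.mem_Icc]; omega
      obtain ⟨hmem, hmin⟩ := hy _ h1
      have hc := hconv _ h1
      have hpK' : p ∈ K (τ + 1) := hpK (m - (τ + 1)) (τ + 1) (by omega) (by omega)
      have hstep : ‖y (τ + 1) - p‖ ≤ ‖y τ - p‖ :=
        frugal_contract hc hmem hpK' (by simpa using hmin)
      exact le_trans hstep (ih (by omega))
  refine ⟨key, fun hδ τ hτ => ?_⟩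
  have h1 : ‖y τ - p‖ ≤ δ := le_trans (key τ hτ) hδ
  calc ‖y τ - y 0‖ = ‖(y τ - p) - (y 0 - p)‖ := by rw [sub_sub_sub_cancel_right]
    _ ≤ ‖y τ - p‖ + ‖y 0 - p‖ := norm_sub_le _ _
    _ ≤ 2 * δ := by linarith
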